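/- arXiv:2002.05064 — 2 statements merged into one kernel-verified Lean document; each statement's English description precedes it below -/
import Mathlib

section
/- With the digit-list encoding of fixed-precision decimals, the digit-wise addition-with-carry operation on digit lists is correct: for non-negative reals a, b, c each having prec-digit decimal representations, dec(a) + dec(b) = dec(c) if and only if adding the digit lists List(a) and List(b) with carry propagation (starting carry 0, each position producing digit (dᵢ+eᵢ+carry) mod 10 and new carry (dᵢ+eᵢ+carry) div 10) yields List(c) with final carry 0; and the final carry is 1 iff a + b has no prec-digit representation (overflow). -/
/-- The numeric value of a digit list (least significant digit first). -/
def digitVal : List ℕ → ℕ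
  | [] => 0
  | d :: ds => d + 10 * digitVal ds

/-- Digit-wise addition with carry propagation on zipped digit pairs,
returning the resulting digit list and the final carry. -/
def addCarry : List (ℕ × ℕ) → ℕ → List ℕ × ℕ
  | [], c => ([], c)
  | (d, e) :: rest, c =>
    let r := addCarry rest ((d + e + c) / 10)
    ((d + e + c) % 10 :: r.1, r.2)

lemma addCarry_spec : ∀ (l : List (ℕ × ℕ)) (c : ℕ),
    digitVal (addCarry l c).1 + (addCarry l c).2 * 10 ^ l.length
      = digitVal (l.map Prod.fst) + digitVal (l.map Prod.snd) + c
  | [], c => by simp [addCarry, digitVal]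
  | (d, e) :: rest, c => by
    have ih := addCarry_spec rest ((d + e + c) / 10)
    have hdm := Nat.div_add_mod (d + e + c) 10
    simp only [addCarry, digitVal, List.map_cons, List.length_cons, pow_succ]
    have h2 : (addCarry rest ((d + e + c) / 10)).2 * (10 ^ rest.length * 10)
        = 10 * ((addCarry rest ((d + e + c) / 10)).2 * 10 ^ rest.length) := by ring
    omega

lemma addCarry_length : ∀ (l : List (ℕ × ℕ)) (c : ℕ),
    (addCarry l c).1.length = l.length
  | [], _ => rfl
  | (d, e) :: rest, c => by
    simp [addCarry, addCarry_length rest]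

lemma addCarry_digits : ∀ (l : List (ℕ × ℕ)) (c : ℕ), ∀ t ∈ (addCarry l c).1, t ≤ 9
  | [], _ => by simp [addCarry]
  | (d, e) :: rest, c => by
    simp only [addCarry, List.mem_cons]
    rintro t (rfl | ht)
    · omega
    · exact addCarry_digits rest _ t ht

lemma addCarry_carry_le : ∀ (l : List (ℕ × ℕ)) (c : ℕ),
    (∀ p ∈ l, p.1 ≤ 9 ∧ p.2 ≤ 9) → c ≤ 1 → (addCarry l c).2 ≤ 1
  | [], c, _, hc => hc
  | (d, e) :: rest, c, h, hc => by
    have hd := h (d, e) (by simp)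
    exact addCarry_carry_le rest _ (fun p hp => h p (by simp [hp])) (by omega)

lemma digitVal_lt : ∀ (l : List ℕ), (∀ d ∈ l, d ≤ 9) → digitVal l < 10 ^ l.length
  | [], _ => by simp [digitVal]
  | d :: ds, h => by
    have hd := h d (by simp)
    have := digitVal_lt ds (fun t ht => h t (by simp [ht]))
    simp only [digitVal, List.length_cons, pow_succ]
    omega

lemma digitVal_inj : ∀ (l m : List ℕ), l.length = m.length →
    (∀ d ∈ l, d ≤ 9) → (∀ d ∈ m, d ≤ 9) → digitVal l = digitVal m → l = m
  | [], [], _, _, _, _ => rfl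
  | d :: ds, e :: es, hlen, hl, hm, hval => by
    have hd := hl d (by simp)
    have he := hm e (by simp)
    simp only [digitVal] at hval
    have hde : d = e ∧ digitVal ds = digitVal es := by omega
    have := digitVal_inj ds es (by simpa using hlen)
      (fun t ht => hl t (by simp [ht])) (fun t ht => hm t (by simp [ht])) hde.2
    simp [hde.1, this]

/-- Correctness of digit-wise addition with carry: for digit lists `x y z` of
length `prec` with digits ≤ 9 (encoding prec-digit decimals least significant
digit first), the values add up exactly iff carry-addition of `x` and `y`
yields `z` with final carry 0; and the final carry is 1 iff the sum overflows
(has no prec-digit representation). -/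
theorem digit_addition_correct (prec : ℕ) (x y z : List ℕ)
    (hx : x.length = prec) (hy : y.length = prec) (hz : z.length = prec)
    (hxd : ∀ d ∈ x, d ≤ 9) (hyd : ∀ d ∈ y, d ≤ 9) (hzd : ∀ d ∈ z, d ≤ 9) :
    (digitVal x + digitVal y = digitVal z ↔ addCarry (x.zip y) 0 = (z, 0)) ∧
    ((addCarry (x.zip y) 0).2 = 1 ↔ 10 ^ prec ≤ digitVal x + digitVal y) := by
  have hlen : (x.zip y).length = prec := by simp [List.length_zip, hx, hy]
  have hfst : (x.zip y).map Prod.fst = x := List.map_fst_zip (by omega)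
  have hsnd : (x.zip y).map Prod.snd = y := List.map_snd_zip (by omega)
  have spec := addCarry_spec (x.zip y) 0
  rw [hfst, hsnd, hlen] at spec
  have hcle : (addCarry (x.zip y) 0).2 ≤ 1 := by
    apply addCarry_carry_le _ _ _ (by norm_num)
    intro p hp
    exact ⟨hxd p.1 (List.of_mem_zip hp).1, hyd p.2 (List.of_mem_zip hp).2⟩
  have hRlt : digitVal (addCarry (x.zip y) 0).1 < 10 ^ prec := by
    have := digitVal_lt (addCarry (x.zip y) 0).1 (addCarry_digits _ _)
    rwa [addCarry_length, hlen] at this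
  have hzlt : digitVal z < 10 ^ prec := hz ▸ digitVal_lt z hzd
  constructor
  · constructor
    · intro hsum
      have hc0 : (addCarry (x.zip y) 0).2 = 0 := by
        rcases Nat.le_one_iff_eq_zero_or_eq_one.mp hcle with h | h
        · exact h
        · rw [h, one_mul] at spec; omega
      rw [hc0, zero_mul, add_zero] at spec
      have hrz : (addCarry (x.zip y) 0).1 = z := by
        apply digitVal_inj _ _ _ (addCarry_digits _ _) hzd (by omega)
        rw [addCarry_length, hlen, hz]
      exact Prod.ext hrz hc0
    · intro h
      rw [h] at spec
      simpa using spec.symm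
  · constructor
    · intro h
      rw [h, one_mul] at spec
      omega
    · intro h
      rcases Nat.le_one_iff_eq_zero_or_eq_one.mp hcle with hc | hc
      · rw [hc, zero_mul, add_zero] at spec; omega
      · exact hc
end

section
/- For the fold-based selection operator that scans a list (a model) from its first element to its last and collects the ID (head) of each tuple whose form matches a given form name, skipping tuples whose ID was already collected, the result is exactly the list of IDs d such that some tuple in the model has ID d and form equal to the given form name, each ID occurring exactly once. -/
private lemma fold_aux {Tup F : Type*} [DecidableEq F]
    (tupId : Tup → ℕ) (tupForm : Tup → F) (fName : F) :
    ∀ (l : List Tup) (acc : List ℕ), acc.Nodup →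
      (∀ d : ℕ,
        d ∈ l.foldl
            (fun acc b =>
              if tupId b ∈ acc then acc
              else if tupForm b = fName then acc ++ [tupId b] else acc)
            acc ↔ d ∈ acc ∨ ∃ b ∈ l, tupId b = d ∧ tupForm b = fName) ∧
      (l.foldl
          (fun acc b =>
            if tupId b ∈ acc then acc
            else if tupForm b = fName then acc ++ [tupId b] else acc)
          acc).Nodup := by
  intro l
  induction l with
  | nil => intro acc h; simpa using h
  | cons a l ih =>
    intro acc h
    simp only [List.foldl_cons]
    by_cases h1 : tupId a ∈ acc
    · simp only [if_pos h1]
      obtain ⟨hm, hn⟩ := ih acc h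
      refine ⟨fun d => ?_, hn⟩
      rw [hm]
      constructor
      · rintro (hd | hd)
        · exact Or.inl hd
        · exact Or.inr (by simpa using Or.inr hd)
      · rintro (hd | ⟨b, hb, h2, h3⟩)
        · exact Or.inl hd
        · rcases List.mem_cons.mp hb with rfl | hb
          · exact Or.inl (h2 ▸ h1)
          · exact Or.inr ⟨b, hb, h2, h3⟩
    · simp only [if_neg h1]
      by_cases h2 : tupForm a = fName
      · simp only [if_pos h2]
        have hnd : (acc ++ [tupId a]).Nodup := by
          simp [List.nodup_append, h, h1]
          rintro x hx rfl; exact h1 hx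
        obtain ⟨hm, hn⟩ := ih _ hnd
        refine ⟨fun d => ?_, hn⟩
        rw [hm]
        simp only [List.mem_append, List.mem_singleton, List.mem_cons]
        constructor
        · rintro ((hd | hd) | hd)
          · exact Or.inl hd
          · rcases hd with rfl | hd
            · exact Or.inr ⟨a, Or.inl rfl, rfl, h2⟩
            · simp at hd
          · obtain ⟨b, hb, hbd, hbf⟩ := hd
            exact Or.inr ⟨b, Or.inr hb, hbd, hbf⟩
        · rintro (hd | ⟨b, (rfl | hb), hbd, hbf⟩)
          · exact Or.inl (Or.inl hd)
          · exact Or.inl (Or.inr (Or.inl hbd.symm))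
          · exact Or.inr ⟨b, hb, hbd, hbf⟩
      · simp only [if_neg h2]
        obtain ⟨hm, hn⟩ := ih acc h
        refine ⟨fun d => ?_, hn⟩
        rw [hm]
        constructor
        · rintro (hd | hd)
          · exact Or.inl hd
          · obtain ⟨b, hb, hbd, hbf⟩ := hd
            exact Or.inr ⟨b, List.mem_cons_of_mem _ hb, hbd, hbf⟩
        · rintro (hd | ⟨b, hb, hbd, hbf⟩)
          · exact Or.inl hd
          · rcases List.mem_cons.mp hb with rfl | hb
            · exact absurd hbf h2
            · exact Or.inr ⟨b, hb, hbd, hbf⟩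

/-- Correctness of the fold-based document filter: scanning the model from its
first tuple to its last and collecting the ID of each tuple whose form matches
the given form name (skipping tuples whose ID was already collected) yields
exactly the IDs of tuples of the given form, each occurring exactly once.
Here `Tup` is the type of model tuples ⟨sit, form, doc, ID⟩, with `tupId`
giving the ID and `tupForm` the form name of a tuple. -/
theorem filter_fold_correct {Tup F : Type*} [DecidableEq F]
    (tupId : Tup → ℕ) (tupForm : Tup → F) (model : List Tup) (fName : F) :
    (∀ d : ℕ,
      d ∈ model.foldl
          (fun acc b =>
            if tupId b ∈ acc then acc
            else if tupForm b = fName then acc ++ [tupId b] else acc)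
          [] ↔
        ∃ b ∈ model, tupId b = d ∧ tupForm b = fName) ∧
    (model.foldl
        (fun acc b =>
          if tupId b ∈ acc then acc
          else if tupForm b = fName then acc ++ [tupId b] else acc)
        []).Nodup := by
  obtain ⟨hm, hn⟩ := fold_aux tupId tupForm fName model [] List.nodup_nil
  exact ⟨fun d => by simpa using hm d, hn⟩
end
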